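/- The code C = {{2,3,4,5}, {1,2,3}, {1,3,4}, {1,4,5}, {1,3}, {1,4}, {2,3}, {3,4}, {4,5}, {3}, {4}} on 5 neurons is not a convex code: for every d ≥ 1 and every choice of convex open subsets U₁,...,U₅ of ℝ^d with X = U₁ ∪ ⋯ ∪ U₅, the code of the cover C(U;X) is not equal to C. -/

import Mathlib

/-- The code of a cover: for open sets `U 0, ..., U (n-1)` in an ambient space,
relative to a set `X`, a codeword `σ` belongs to the code iff the region
`(⋂ i ∈ σ, U i) ∩ X \ ⋃ j ∉ σ, U j` is nonempty.  (The intersection with `X`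
implements the convention that the empty intersection equals `X`.) -/
def coverCode {α : Type*} (n : ℕ) (U : Fin n → Set α) (X : Set α) :
    Set (Finset (Fin n)) :=
  {σ | (((⋂ i ∈ σ, U i) ∩ X) \ ⋃ j ∈ σᶜ, U j).Nonempty}

/-- Auxiliary: from a point of an open set we can move a little bit in any direction
and stay in the set, with a step size in `(0,1)`. -/
lemma small_step {d : ℕ} {S : Set (Fin d → ℝ)} (hS : IsOpen S)
    {y : Fin d → ℝ} (hy : y ∈ S) (v : Fin d → ℝ) :
    ∃ τ : ℝ, 0 < τ ∧ τ < 1 ∧ y + τ • v ∈ S := by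
  have hcont : Continuous (fun τ : ℝ => y + τ • v) :=
    continuous_const.add (continuous_id.smul continuous_const)
  have hpre : IsOpen ((fun τ : ℝ => y + τ • v) ⁻¹' S) := hS.preimage hcont
  have h0 : (0 : ℝ) ∈ (fun τ : ℝ => y + τ • v) ⁻¹' S := by
    simp only [Set.mem_preimage, zero_smul, add_zero]
    exact hy
  obtain ⟨δ, hδ, hball⟩ := Metric.isOpen_iff.mp hpre 0 h0
  refine ⟨min (δ / 2) (1 / 2), by positivity,
    lt_of_le_of_lt (min_le_right _ _) (by norm_num), ?_⟩
  apply hball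
  simp only [Metric.mem_ball, Real.dist_eq, sub_zero]
  rw [abs_of_pos (by positivity)]
  exact lt_of_le_of_lt (min_le_left _ _) (by linarith)

set_option maxHeartbeats 2000000 in
/-- The geometric core: five convex open sets with the intersection pattern forced by
the code `{2345, 123, 134, 145, 13, 14, 23, 34, 45, 3, 4}` cannot exist. -/
lemma main_geom {d : ℕ} (A B C D F : Set (Fin d → ℝ))
    (hAconv : Convex ℝ A) (hBconv : Convex ℝ B) (hCconv : Convex ℝ C)
    (hDconv : Convex ℝ D) (hFconv : Convex ℝ F)
    (hAo : IsOpen A) (hBo : IsOpen B) (hCo : IsOpen C) (hDo : IsOpen D)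
    (hAsub : ∀ z, z ∈ A → z ∈ C ∨ z ∈ D)
    (hBD : ∀ z, z ∈ B → z ∈ D → z ∈ C ∧ z ∈ F ∧ z ∉ A)
    (hCF : ∀ z, z ∈ C → z ∈ F → z ∈ B ∧ z ∈ D ∧ z ∉ A)
    (p q r : Fin d → ℝ)
    (hpA : p ∈ A) (hpB : p ∈ B) (hpC : p ∈ C)
    (hqA : q ∈ A) (hqD : q ∈ D) (hqF : q ∈ F)
    (hrB : r ∈ B) (hrC : r ∈ C) (hrD : r ∈ D) (hrF : r ∈ F) : False := by
  classical
  set E : Set (Fin d → ℝ) := B ∩ D with hEdef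
  have hrE : r ∈ E := ⟨hrB, hrD⟩
  have hEo : IsOpen E := hBo.inter hDo
  have hEconv : Convex ℝ E := hBconv.inter hDconv
  have hECF : E = C ∩ F := by
    ext z
    constructor
    · rintro ⟨h1, h3⟩
      exact ⟨(hBD z h1 h3).1, (hBD z h1 h3).2.1⟩
    · rintro ⟨h2, h4⟩
      exact ⟨(hCF z h2 h4).1, (hCF z h2 h4).2.1⟩
  have hdisj : Disjoint A E := by
    rw [Set.disjoint_left]
    intro z hzA hzE
    exact (hBD z hzE.1 hzE.2).2.2 hzA
  -- a point x of the segment [p,q] lying in C ∩ D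
  have hseg : segment ℝ p q ⊆ A := hAconv.segment_subset hpA hqA
  obtain ⟨x, hxseg, hxC, hxD⟩ : ∃ x ∈ segment ℝ p q, x ∈ C ∧ x ∈ D := by
    have hcov : segment ℝ p q ⊆ C ∪ D := fun z hz => (hAsub z (hseg hz)).imp id id
    obtain ⟨x, hx1, hx2⟩ := (convex_segment p q).isPreconnected C D hCo hDo hcov
      ⟨p, left_mem_segment ℝ p q, hpC⟩ ⟨q, right_mem_segment ℝ p q, hqD⟩
    exact ⟨x, hx1, hx2.1, hx2.2⟩
  have hxA : x ∈ A := hseg hxseg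
  obtain ⟨a1, t, ha1, ht0, hsum1, hxeq⟩ := hxseg
  have hxeq2 : (1 - t) • p + t • q = x := by
    have ha1' : a1 = 1 - t := by linarith
    rw [← ha1']
    exact hxeq
  have htpos : 0 < t := by
    rcases ht0.lt_or_eq with hlt | heq
    · exact hlt
    · exfalso
      have hxp : x = p := by rw [← hxeq2, ← heq]; simp
      rw [hxp] at hxD
      exact (hBD p hpB hxD).2.2 hpA
  have htle : t ≤ 1 := by linarith
  have htlt1 : t < 1 := by
    rcases lt_or_eq_of_le htle with hlt | heq
    · exact hlt
    · exfalso
      have hxq : x = q := by rw [← hxeq2, heq]; simp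
      rw [hxq] at hxC
      exact (hCF q hxC hqF).2.2 hqA
  -- a second lamp x'
  obtain ⟨τ, hτ0, hτ1, hx'mem⟩ :=
    small_step (hCo.inter hDo) (⟨hxC, hxD⟩ : x ∈ C ∩ D) (q - x)
  set x' := x + τ • (q - x) with hx'def
  set t' := t + τ * (1 - t) with ht'def
  have hx'eq : (1 - t') • p + t' • q = x' := by
    rw [hx'def, ← hxeq2, ht'def]
    match_scalars <;> ring
  have hx'C : x' ∈ C := hx'mem.1
  have hx'D : x' ∈ D := hx'mem.2
  have ht'0 : 0 < t' := by nlinarith [mul_pos hτ0 (by linarith : (0:ℝ) < 1 - t)]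
  have ht'1 : t' < 1 := by
    nlinarith [mul_pos (by linarith : (0:ℝ) < 1 - τ) (by linarith : (0:ℝ) < 1 - t)]
  have ht't : t < t' := by nlinarith [mul_pos hτ0 (by linarith : (0:ℝ) < 1 - t)]
  -- separating functional
  obtain ⟨f, c, hfA, hfE⟩ := geometric_hahn_banach_open hAconv hAo hEconv hdisj
  -- the compact triangle T = conv {p, q, r}
  set T := (fun w : Fin 3 → ℝ => w 0 • p + w 1 • q + w 2 • r) '' stdSimplex ℝ (Fin 3)
    with hTdef
  have hcontΦ : Continuous (fun w : Fin 3 → ℝ => w 0 • p + w 1 • q + w 2 • r) :=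
    (((continuous_apply (0 : Fin 3)).smul continuous_const).add
      ((continuous_apply (1 : Fin 3)).smul continuous_const)).add
      ((continuous_apply (2 : Fin 3)).smul continuous_const)
  have hTcomp : IsCompact T := (isCompact_stdSimplex ℝ (Fin 3)).image hcontΦ
  have hTmem : ∀ α β γ : ℝ, 0 ≤ α → 0 ≤ β → 0 ≤ γ → α + β + γ = 1 →
      α • p + β • q + γ • r ∈ T := by
    intro α β γ hα hβ hγ hsum
    refine ⟨![α, β, γ], ⟨?_, ?_⟩, ?_⟩
    · intro i
      fin_cases i
      · simpa using hα
      · simpa using hβ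
      · simpa using hγ
    · rw [Fin.sum_univ_three]
      simpa using hsum
    · simp
  have hrT : r ∈ T := by
    have h1 := hTmem 0 0 1 le_rfl le_rfl zero_le_one (by ring)
    simpa using h1
  set K := closure E ∩ T with hKdef
  have hKcomp : IsCompact K := hTcomp.inter_left isClosed_closure
  have hKne : K.Nonempty := ⟨r, subset_closure hrE, hrT⟩
  obtain ⟨z0, hz0K, hminz'⟩ := hKcomp.exists_isMinOn hKne f.continuous.continuousOn
  have hminz : ∀ y ∈ K, f z0 ≤ f y := fun y hy => hminz' hy
  obtain ⟨hz0E, hz0T⟩ := hz0K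
  have hclc : ∀ y ∈ closure E, c ≤ f y := by
    intro y hy
    have hcl : IsClosed {y : Fin d → ℝ | c ≤ f y} :=
      isClosed_le continuous_const f.continuous
    exact closure_minimal (fun e he => hfE e he) hcl hy
  obtain ⟨w, hw, hwz⟩ := hz0T
  have ha : 0 ≤ w 0 := hw.1 0
  have hb : 0 ≤ w 1 := hw.1 1
  have hc0 : 0 ≤ w 2 := hw.1 2
  have habc : w 0 + w 1 + w 2 = 1 := by
    have h2 := hw.2
    rwa [Fin.sum_univ_three] at h2
  set a := w 0
  set b := w 1
  set c0 := w 2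
  have hz0rep : z0 = a • p + b • q + c0 • r := by
    rw [← hwz]
  have hμc : c ≤ f z0 := hclc z0 hz0E
  -- f z0 < f r
  obtain ⟨τ₀, hτ₀0, hτ₀1, hw0E⟩ := small_step hEo hrE (x - r)
  have hw0T : r + τ₀ • (x - r) ∈ T := by
    have heq : r + τ₀ • (x - r) = (τ₀ * (1 - t)) • p + (τ₀ * t) • q + (1 - τ₀) • r := by
      rw [← hxeq2]
      match_scalars <;> ring
    rw [heq]
    exact hTmem _ _ _ (mul_nonneg hτ₀0.le (by linarith)) (mul_nonneg hτ₀0.le htpos.le)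
      (by linarith) (by ring)
  have hμr : f z0 < f r := by
    have h1 : f (r + τ₀ • (x - r)) = f r + τ₀ * (f x - f r) := by
      rw [map_add, map_smul, map_sub, smul_eq_mul]
    have hfx : f x < c := hfA x hxA
    have hfr : c ≤ f r := hfE r hrE
    have h2 := hminz _ ⟨subset_closure hw0E, hw0T⟩
    rw [h1] at h2
    have h3 : f x - f r < 0 := by linarith
    have h4 : τ₀ * (f x - f r) < 0 := mul_neg_of_pos_of_neg hτ₀0 h3
    linarith
  have hab : 0 < a + b := by
    rcases lt_or_eq_of_le (add_nonneg ha hb) with hlt | heq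
    · exact hlt
    · exfalso
      have ha0 : a = 0 := by linarith
      have hb0 : b = 0 := by linarith
      have hc01 : c0 = 1 := by linarith
      have hz0r : z0 = r := by rw [hz0rep, ha0, hb0, hc01]; simp
      rw [hz0r] at hμr
      exact lt_irrefl _ hμr
  -- descent steps
  have stepA : ∀ (σ : ℝ) (y : Fin d → ℝ), 0 < σ → σ < 1 →
      (1 - σ) • p + σ • q = y → y ∈ C → y ∈ D → (a + b) * σ < b → False := by
    intro σ y hσ0 hσ1 hyeq hyC hyD hcond
    have hbpos : 0 < b := lt_of_le_of_lt (mul_nonneg hab.le hσ0.le) hcond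
    have hden : 0 < b + c0 * σ :=
      add_pos_of_pos_of_nonneg hbpos (mul_nonneg hc0 hσ0.le)
    set s := σ / (b + c0 * σ) with hsdef
    have hsprod : s * (b + c0 * σ) = σ := by
      rw [hsdef]; exact div_mul_cancel₀ _ (ne_of_gt hden)
    have hs0 : 0 ≤ s := le_of_lt (div_pos hσ0 hden)
    have hs1 : s < 1 := by
      rw [hsdef, div_lt_one hden]
      nlinarith [hcond, habc]
    have hu0 : 0 ≤ s * c0 := mul_nonneg hs0 hc0
    have hu1 : s * c0 ≤ 1 := by nlinarith [mul_nonneg hs0 hbpos.le, hsprod, hσ0]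
    have hz2 : (1 - s) • p + s • z0 = (1 - s * c0) • y + (s * c0) • r := by
      rw [hz0rep, ← hyeq]
      match_scalars
      · linear_combination s * habc - hsprod
      · linear_combination hsprod
      · ring
    have hz0B : z0 ∈ closure B := closure_mono Set.inter_subset_left hz0E
    have hzclB : (1 - s) • p + s • z0 ∈ closure B :=
      hBconv.closure (subset_closure hpB) hz0B (by linarith) hs0 (by ring)
    have hzD : (1 - s) • p + s • z0 ∈ D := by
      rw [hz2]
      exact hDconv hyD hrD (by linarith) hu0 (by ring)
    have hzE : (1 - s) • p + s • z0 ∈ closure E := by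
      have h1 : (1 - s) • p + s • z0 ∈ closure (D ∩ B) :=
        hDo.inter_closure ⟨hzD, hzclB⟩
      rwa [Set.inter_comm, ← hEdef] at h1
    have hzT : (1 - s) • p + s • z0 ∈ T := by
      have heq : (1 - s) • p + s • z0 = (1 - s + s * a) • p + (s * b) • q + (s * c0) • r := by
        rw [hz0rep]
        match_scalars <;> ring
      rw [heq]
      exact hTmem _ _ _ (by nlinarith [mul_nonneg hs0 ha]) (mul_nonneg hs0 hb) hu0
        (by linear_combination s * habc)
    have hfz : f ((1 - s) • p + s • z0) < f z0 := by
      have h1 : f ((1 - s) • p + s • z0) = (1 - s) * f p + s * f z0 := by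
        rw [map_add, map_smul, map_smul, smul_eq_mul, smul_eq_mul]
      have h2 : f p < f z0 := lt_of_lt_of_le (hfA p hpA) hμc
      rw [h1]
      nlinarith [h2, hs1, hs0]
    exact absurd (hminz _ ⟨hzE, hzT⟩) (not_le.mpr hfz)
  have hEF : E ⊆ F := by
    rw [hECF]; exact Set.inter_subset_right
  have stepB : ∀ (σ : ℝ) (y : Fin d → ℝ), 0 < σ → σ < 1 →
      (1 - σ) • p + σ • q = y → y ∈ C → y ∈ D → b < (a + b) * σ → False := by
    intro σ y hσ0 hσ1 hyeq hyC hyD hcond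
    have hapos : 0 < a := by nlinarith [hcond, hb, hσ1, hσ0, ha]
    have hden : 0 < a + c0 * (1 - σ) :=
      add_pos_of_pos_of_nonneg hapos (mul_nonneg hc0 (by linarith))
    set s := (1 - σ) / (a + c0 * (1 - σ)) with hsdef
    have hsprod : s * (a + c0 * (1 - σ)) = 1 - σ := by
      rw [hsdef]; exact div_mul_cancel₀ _ (ne_of_gt hden)
    have hs0 : 0 ≤ s := le_of_lt (div_pos (by linarith) hden)
    have hs1 : s < 1 := by
      rw [hsdef, div_lt_one hden]
      nlinarith [hcond, habc]
    have hu0 : 0 ≤ s * c0 := mul_nonneg hs0 hc0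
    have hu1 : s * c0 ≤ 1 := by
      nlinarith [mul_nonneg hs0 hapos.le, hsprod, hσ1]
    have hz2 : (1 - s) • q + s • z0 = (1 - s * c0) • y + (s * c0) • r := by
      rw [hz0rep, ← hyeq]
      match_scalars
      · linear_combination s * habc - hsprod
      · linear_combination hsprod
      · ring
    have hz0F : z0 ∈ closure F := closure_mono hEF hz0E
    have hzclF : (1 - s) • q + s • z0 ∈ closure F :=
      hFconv.closure (subset_closure hqF) hz0F (by linarith) hs0 (by ring)
    have hzC : (1 - s) • q + s • z0 ∈ C := by
      rw [hz2]
      exact hCconv hyC hrC (by linarith) hu0 (by ring)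
    have hzE : (1 - s) • q + s • z0 ∈ closure E := by
      have h1 : (1 - s) • q + s • z0 ∈ closure (C ∩ F) :=
        hCo.inter_closure ⟨hzC, hzclF⟩
      rwa [← hECF] at h1
    have hzT : (1 - s) • q + s • z0 ∈ T := by
      have heq : (1 - s) • q + s • z0 = (s * a) • p + (1 - s + s * b) • q + (s * c0) • r := by
        rw [hz0rep]
        match_scalars <;> ring
      rw [heq]
      exact hTmem _ _ _ (mul_nonneg hs0 ha) (by nlinarith [mul_nonneg hs0 hb]) hu0
        (by linear_combination s * habc)
    have hfz : f ((1 - s) • q + s • z0) < f z0 := by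
      have h1 : f ((1 - s) • q + s • z0) = (1 - s) * f q + s * f z0 := by
        rw [map_add, map_smul, map_smul, smul_eq_mul, smul_eq_mul]
      have h2 : f q < f z0 := lt_of_lt_of_le (hfA q hqA) hμc
      rw [h1]
      nlinarith [h2, hs1, hs0]
    exact absurd (hminz _ ⟨hzE, hzT⟩) (not_le.mpr hfz)
  rcases lt_trichotomy ((a + b) * t) b with hh | hh | hh
  · exact stepA t x htpos htlt1 hxeq2 hxC hxD hh
  · apply stepB t' x' ht'0 ht'1 hx'eq hx'C hx'D
    nlinarith [mul_pos hab (sub_pos.mpr ht't)]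
  · exact stepB t x htpos htlt1 hxeq2 hxC hxD hh

/-- the code `C = {2345, 123, 134, 145, 13, 14, 23, 34, 45, 3, 4}`
(written here with neurons indexed `0,…,4` instead of `1,…,5`) is not a convex
code: no choice of convex open subsets `U 0, …, U 4` of `ℝ^d` realizes it as the
code of the cover of `X = ⋃ i, U i`. -/
theorem stmt6 (d : ℕ) (hd : 1 ≤ d) (U : Fin 5 → Set (Fin d → ℝ))
    (hconv : ∀ i, Convex ℝ (U i)) (hopen : ∀ i, IsOpen (U i)) :
    coverCode 5 U (⋃ i, U i) ≠
      ({ {1, 2, 3, 4}, {0, 1, 2}, {0, 2, 3}, {0, 3, 4}, {0, 2}, {0, 3},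
         {1, 2}, {2, 3}, {3, 4}, {2}, {3} } : Set (Finset (Fin 5))) := by
  intro h
  classical
  have hmemC : ∀ σ : Finset (Fin 5), σ ∈ coverCode 5 U (⋃ i, U i) ↔
      (σ = {1,2,3,4} ∨ σ = {0,1,2} ∨ σ = {0,2,3} ∨ σ = {0,3,4} ∨ σ = {0,2} ∨ σ = {0,3} ∨
       σ = {1,2} ∨ σ = {2,3} ∨ σ = {3,4} ∨ σ = {2} ∨ σ = {3}) := by
    intro σ
    rw [h]
    simp only [Set.mem_insert_iff, Set.mem_singleton_iff]
  have hatom : ∀ σ : Finset (Fin 5), σ ∈ coverCode 5 U (⋃ i, U i) →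
      ∃ z, (∀ i, i ∈ σ → z ∈ U i) ∧ (∀ j, j ∉ σ → z ∉ U j) := by
    intro σ hσ
    obtain ⟨z, hz⟩ := hσ
    refine ⟨z, fun i hi => Set.mem_iInter₂.mp hz.1.1 i hi, fun j hj hzj => hz.2 ?_⟩
    exact Set.mem_iUnion₂.mpr ⟨j, Finset.mem_compl.mpr hj, hzj⟩
  obtain ⟨p, hpin, hpout⟩ := hatom {0,1,2} ((hmemC _).mpr (Or.inr (Or.inl rfl)))
  obtain ⟨q, hqin, hqout⟩ := hatom {0,3,4}
    ((hmemC _).mpr (Or.inr (Or.inr (Or.inr (Or.inl rfl)))))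
  obtain ⟨r, hrin, hrout⟩ := hatom {1,2,3,4} ((hmemC _).mpr (Or.inl rfl))
  have hXmem : ∀ {z : Fin d → ℝ} {i : Fin 5}, z ∈ U i → z ∈ ⋃ i, U i :=
    fun hz => Set.mem_iUnion.mpr ⟨_, hz⟩
  have hkey : ∀ z : Fin d → ℝ, z ∈ (⋃ i, U i) →
      ((z ∈ U 0 → z ∈ U 2 ∨ z ∈ U 3) ∧
       (z ∈ U 1 → z ∈ U 3 → z ∈ U 2 ∧ z ∈ U 4 ∧ z ∉ U 0) ∧
       (z ∈ U 2 → z ∈ U 4 → z ∈ U 1 ∧ z ∈ U 3 ∧ z ∉ U 0)) := by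
    intro z hzX
    set σz : Finset (Fin 5) := Finset.univ.filter (fun i => z ∈ U i) with hσz
    have hiff : ∀ i, i ∈ σz ↔ z ∈ U i := by
      intro i
      rw [hσz]
      simp
    have hzC : σz ∈ coverCode 5 U (⋃ i, U i) := by
      refine ⟨z, ⟨Set.mem_iInter₂.mpr fun i hi => (hiff i).mp hi, hzX⟩, fun hcon => ?_⟩
      obtain ⟨j, hj, hzj⟩ := Set.mem_iUnion₂.mp hcon
      exact Finset.mem_compl.mp hj ((hiff j).mpr hzj)
    have habs : (0 ∈ σz → 2 ∈ σz ∨ 3 ∈ σz) ∧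
        (1 ∈ σz → 3 ∈ σz → 2 ∈ σz ∧ 4 ∈ σz ∧ 0 ∉ σz) ∧
        (2 ∈ σz → 4 ∈ σz → 1 ∈ σz ∧ 3 ∈ σz ∧ 0 ∉ σz) := by
      rcases (hmemC σz).mp hzC with hc|hc|hc|hc|hc|hc|hc|hc|hc|hc|hc <;> rw [hc] <;> decide
    refine ⟨fun h0 => (habs.1 ((hiff 0).mpr h0)).imp (hiff 2).mp (hiff 3).mp,
      fun h1 h3 => ?_, fun h2 h4 => ?_⟩
    · obtain ⟨hh2, hh4, hh0⟩ := habs.2.1 ((hiff 1).mpr h1) ((hiff 3).mpr h3)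
      exact ⟨(hiff 2).mp hh2, (hiff 4).mp hh4, fun hz0 => hh0 ((hiff 0).mpr hz0)⟩
    · obtain ⟨hh1, hh3, hh0⟩ := habs.2.2 ((hiff 2).mpr h2) ((hiff 4).mpr h4)
      exact ⟨(hiff 1).mp hh1, (hiff 3).mp hh3, fun hz0 => hh0 ((hiff 0).mpr hz0)⟩
  exact main_geom (U 0) (U 1) (U 2) (U 3) (U 4)
    (hconv 0) (hconv 1) (hconv 2) (hconv 3) (hconv 4)
    (hopen 0) (hopen 1) (hopen 2) (hopen 3)
    (fun z hz => (hkey z (hXmem hz)).1 hz)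
    (fun z h1 h3 => (hkey z (hXmem h1)).2.1 h1 h3)
    (fun z h2 h4 => (hkey z (hXmem h2)).2.2 h2 h4)
    p q r
    (hpin 0 (by decide)) (hpin 1 (by decide)) (hpin 2 (by decide))
    (hqin 0 (by decide)) (hqin 3 (by decide)) (hqin 4 (by decide))
    (hrin 1 (by decide)) (hrin 2 (by decide)) (hrin 3 (by decide)) (hrin 4 (by decide))
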